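/- Assume conditions (I1)-(I5). Then the reduced functional J∘m : X⁺ → ℝ is of class C¹, and its derivative is given by (J∘m)'(u⁺)[w] = J'(m(u⁺))[w] for every u⁺ ∈ X⁺ and every w ∈ X⁺. -/

import Mathlib

open Filter Topology Set

noncomputable section

variable {X : Type*} [NormedAddCommGroup X] [NormedSpace ℝ X] [CompleteSpace X]

/-- 𝒯-convergence of a sequence: norm convergence of the `X⁺`-components together with
weak convergence of the `X̃`-components (`P` is the projection onto `X⁺` along `X̃`). -/
def TConv (P : X →L[ℝ] X) (u : ℕ → X) (l : X) : Prop :=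
  Tendsto (fun n => P (u n)) atTop (𝓝 (P l)) ∧
    ∀ φ : StrongDual ℝ X, Tendsto (fun n => φ (u n - P (u n))) atTop (𝓝 (φ (l - P l)))

/-- The functional `J(u) = ½‖u⁺‖² − I(u)`. -/
def Jf (P : X →L[ℝ] X) (I : X → ℝ) : X → ℝ := fun u => (1 / 2 : ℝ) * ‖P u‖ ^ 2 - I u

/-- `M = {u ∈ X : I'(u)[v] = 0 for all v ∈ X̃}`. -/
def Mset (P : X →L[ℝ] X) (I : X → ℝ) : Set X := {u | ∀ v : X, P v = 0 → fderiv ℝ I u v = 0}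

/-- The Nehari–Pankov set `N = {u ∈ X \ X̃ : J'(u)|_{ℝu ⊕ X̃} = 0}`. -/
def Nset (P : X →L[ℝ] X) (I : X → ℝ) : Set X :=
  {u | P u ≠ 0 ∧ fderiv ℝ (Jf P I) u u = 0 ∧ ∀ v : X, P v = 0 → fderiv ℝ (Jf P I) u v = 0}

/-- Structural hypotheses: `X` is a reflexive Banach space, `P : X → X` is a continuous
linear idempotent (the projection onto `X⁺ = {u : P u = u}` along `X̃ = ker P`),
`‖u‖² = ‖u⁺‖² + ‖ũ‖²`, and the norm on `X⁺` is induced by a Hilbert inner product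
(parallelogram law). -/
structure SpaceHyp (P : X →L[ℝ] X) : Prop where
  idem : ∀ u : X, P (P u) = P u
  pyth : ∀ u : X, ‖u‖ ^ 2 = ‖P u‖ ^ 2 + ‖u - P u‖ ^ 2
  parallelogram : ∀ u v : X, P u = u → P v = v →
    ‖u + v‖ ^ 2 + ‖u - v‖ ^ 2 = 2 * ‖u‖ ^ 2 + 2 * ‖v‖ ^ 2
  reflexive : Function.Surjective (NormedSpace.inclusionInDoubleDual ℝ X)

/-- (I1) `I ∈ C¹(X, ℝ)` and `I(u) ≥ I(0) = 0`. -/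
def CondI1 (I : X → ℝ) : Prop := ContDiff ℝ 1 I ∧ I 0 = 0 ∧ ∀ u : X, 0 ≤ I u

/-- (I2) `I` is 𝒯-sequentially lower semicontinuous. -/
def CondI2 (P : X →L[ℝ] X) (I : X → ℝ) : Prop :=
  ∀ (u : ℕ → X) (l : X), TConv P u l → I l ≤ Filter.liminf (fun n => I (u n)) atTop

/-- (I3) If `u_n →_𝒯 u` and `I(u_n) → I(u)` then `u_n → u` in norm. -/
def CondI3 (P : X →L[ℝ] X) (I : X → ℝ) : Prop :=
  ∀ (u : ℕ → X) (l : X), TConv P u l → Tendsto (fun n => I (u n)) atTop (𝓝 (I l)) →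
    Tendsto u atTop (𝓝 l)

/-- (I4) `‖u⁺‖ + I(u) → ∞` as `‖u‖ → ∞`. -/
def CondI4 (P : X →L[ℝ] X) (I : X → ℝ) : Prop :=
  ∀ u : ℕ → X, Tendsto (fun n => ‖u n‖) atTop atTop →
    Tendsto (fun n => ‖P (u n)‖ + I (u n)) atTop atTop

/-- (I5) If `u ∈ M` then `I(u) < I(u + v)` for every `v ∈ X̃ \ {0}`. -/
def CondI5 (P : X →L[ℝ] X) (I : X → ℝ) : Prop :=
  ∀ u ∈ Mset P I, ∀ v : X, P v = 0 → v ≠ 0 → I u < I (u + v)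

/-- (I6) `a := inf {J(u) : u ∈ X⁺, ‖u‖ = r} > 0` for some `r > 0`. -/
def CondI6 (P : X →L[ℝ] X) (I : X → ℝ) (r a : ℝ) : Prop :=
  0 < r ∧ a = sInf (Jf P I '' {u : X | P u = u ∧ ‖u‖ = r}) ∧ 0 < a

/-- (I7) There exists `u⁺ ∈ X⁺` with `sup_{v ∈ X̃} J(u⁺ + v) < a`. -/
def CondI7 (P : X →L[ℝ] X) (I : X → ℝ) (a : ℝ) : Prop :=
  ∃ up : X, P up = up ∧ ∃ b : ℝ, b < a ∧ ∀ v : X, P v = 0 → Jf P I (up + v) ≤ b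

/-- (I8) `I(t_n u_n)/t_n² → ∞` whenever `t_n → ∞` and `u_n⁺ → u⁺ ≠ 0`. -/
def CondI8 (P : X →L[ℝ] X) (I : X → ℝ) : Prop :=
  ∀ (t : ℕ → ℝ) (u : ℕ → X) (w : X), Tendsto t atTop atTop →
    Tendsto (fun n => P (u n)) atTop (𝓝 w) → w ≠ 0 →
      Tendsto (fun n => I (t n • u n) / t n ^ 2) atTop atTop

/-- (I9) The Nehari–Pankov inequality for `I`. -/
def CondI9 (P : X →L[ℝ] X) (I : X → ℝ) : Prop :=
  ∀ u ∈ Nset P I, ∀ t : ℝ, 0 ≤ t → ∀ v : X, P v = 0 → u ≠ t • u + v →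
    (t ^ 2 - 1) / 2 * fderiv ℝ I u u + t * fderiv ℝ I u v + I u - I (t • u + v) < 0

/-- A `(PS)_c`-sequence for `J`. -/
def PSSeq (P : X →L[ℝ] X) (I : X → ℝ) (c : ℝ) (u : ℕ → X) : Prop :=
  Tendsto (fun n => Jf P I (u n)) atTop (𝓝 c) ∧
    Tendsto (fun n => ‖fderiv ℝ (Jf P I) (u n)‖) atTop (𝓝 0)

/-- `J` satisfies the `(PS)ᵀ_c`-condition in `S`: every `(PS)_c`-sequence contained in `S`
has a 𝒯-convergent subsequence. -/
def PSTCond (P : X →L[ℝ] X) (I : X → ℝ) (S : Set X) (c : ℝ) : Prop :=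
  ∀ u : ℕ → X, (∀ n, u n ∈ S) → PSSeq P I c u →
    ∃ (φ : ℕ → ℕ) (l : X), StrictMono φ ∧ TConv P (u ∘ φ) l

/-- The class of mountain pass paths in `M`. -/
def GammaSet (P : X →L[ℝ] X) (I : X → ℝ) (r a : ℝ) : Set C(unitInterval, X) :=
  {γ | (∀ t, γ t ∈ Mset P I) ∧ γ 0 = 0 ∧ r < ‖P (γ 1)‖ ∧ Jf P I (γ 1) < a}

/-- The mountain pass level `c_M = inf_{γ ∈ Γ} max_{t ∈ [0,1]} J(γ(t))`. -/
def cMP (P : X →L[ℝ] X) (I : X → ℝ) (r a : ℝ) : ℝ :=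
  sInf ((fun γ : C(unitInterval, X) => sSup (range fun t => Jf P I (γ t))) '' GammaSet P I r a)

/-- The Nehari–Pankov level `c_N = inf_N J`. -/
def cNP (P : X →L[ℝ] X) (I : X → ℝ) : ℝ := sInf (Jf P I '' Nset P I)




/-- A continuous linear functional that is bounded above on a submodule vanishes on it. -/
lemma zero_on_submodule_of_bddAbove {E : Type*} [NormedAddCommGroup E] [NormedSpace ℝ E]
    (S : Submodule ℝ E) (f : E →L[ℝ] ℝ) (u : ℝ) (h : ∀ a ∈ (S : Set E), f a < u)
    {a : E} (ha : a ∈ S) : f a = 0 := by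
  by_contra hfa
  have h1 : f (((u + |u| + 1) / f a) • a) < u := h _ (S.smul_mem _ ha)
  rw [map_smul] at h1
  rw [smul_eq_mul, div_mul_cancel₀ _ hfa] at h1
  nlinarith [abs_nonneg u, le_abs_self u]

/-- For a closed submodule `S` and `z ∉ S`, there is a dual functional vanishing on `S`
and positive at `z`. -/
lemma exists_dual_annihilator {E : Type*} [NormedAddCommGroup E] [NormedSpace ℝ E]
    (S : Submodule ℝ E) (hS : IsClosed (S : Set E)) {z : E} (hz : z ∉ S) :
    ∃ f : E →L[ℝ] ℝ, (∀ a ∈ S, f a = 0) ∧ 0 < f z := by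
  obtain ⟨f, u, hfu, huz⟩ := geometric_hahn_banach_closed_point (S.convex) hS hz
  have hu0 : 0 < u := by simpa using hfu 0 (S.zero_mem)
  exact ⟨f, fun a ha => zero_on_submodule_of_bddAbove S f u hfu ha, hu0.trans huz⟩

/-- If the dual of a normed real vector space is separable, then so is the space itself. -/
lemma separable_of_dual_separable (E : Type*) [NormedAddCommGroup E] [NormedSpace ℝ E]
    [TopologicalSpace.SeparableSpace (StrongDual ℝ E)] :
    TopologicalSpace.SeparableSpace E := by
  have : Nonempty (StrongDual ℝ E) := ⟨0⟩
  set φ : ℕ → StrongDual ℝ E := TopologicalSpace.denseSeq _ with hφdef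
  have hφ : DenseRange φ := TopologicalSpace.denseRange_denseSeq _
  -- choose norming vectors
  have hx : ∀ k : ℕ, ∃ x : E, ‖x‖ ≤ 1 ∧ ‖φ k‖ / 2 ≤ φ k x := by
    intro k
    rcases eq_or_ne (φ k) 0 with h0 | h0
    · exact ⟨0, by simp, by simp [h0]⟩
    · have hlt : ‖φ k‖ / 2 < ‖φ k‖ := by
        have : 0 < ‖φ k‖ := norm_pos_iff.2 h0
        linarith
      obtain ⟨x, hx1, hx2⟩ := (φ k).exists_lt_apply_of_lt_opNorm hlt
      rcases le_or_gt 0 (φ k x) with hpos | hneg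
      · exact ⟨x, hx1.le, by rw [Real.norm_eq_abs, abs_of_nonneg hpos] at hx2; linarith⟩
      · refine ⟨-x, by simpa using hx1.le, ?_⟩
        rw [map_neg]
        rw [Real.norm_eq_abs, abs_of_neg hneg] at hx2
        linarith
  choose x hx1 hx2 using hx
  set S : Submodule ℝ E := Submodule.span ℝ (Set.range x) with hSdef
  have hdense : ∀ z : E, z ∈ S.topologicalClosure := by
    intro z
    by_contra hz
    obtain ⟨f, hf0, hfz⟩ := exists_dual_annihilator S.topologicalClosure
      S.isClosed_topologicalClosure hz
    have hfne : f ≠ 0 := by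
      intro h; rw [h] at hfz; simp at hfz
    have hfpos : 0 < ‖f‖ := norm_pos_iff.2 hfne
    obtain ⟨k, hk⟩ : ∃ k, dist f (φ k) < ‖f‖ / 4 :=
      hφ.exists_dist_lt f (by positivity : (0:ℝ) < ‖f‖/4)
    have hnk : ‖φ k - f‖ < ‖f‖ / 4 := by
      rw [dist_eq_norm] at hk
      rwa [norm_sub_rev]
    have hφknorm : 3 / 4 * ‖f‖ ≤ ‖φ k‖ := by
      have h1 : ‖f‖ - ‖φ k‖ ≤ ‖f - φ k‖ := norm_sub_norm_le f (φ k)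
      have h2 : ‖f - φ k‖ = ‖φ k - f‖ := norm_sub_rev _ _
      linarith
    have hfx : f (x k) = 0 := hf0 _ (S.le_topologicalClosure (Submodule.subset_span (mem_range_self k)))
    have hdiff : |φ k (x k) - f (x k)| ≤ ‖φ k - f‖ * ‖x k‖ := by
      have := (φ k - f).le_opNorm (x k)
      simpa using this
    rw [hfx, sub_zero] at hdiff
    have : ‖φ k‖ / 2 ≤ ‖f‖/4 := by
      calc ‖φ k‖ / 2 ≤ φ k (x k) := hx2 k
        _ ≤ |φ k (x k)| := le_abs_self _
        _ ≤ ‖φ k - f‖ * ‖x k‖ := hdiff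
        _ ≤ ‖f‖/4 * 1 := by
            apply mul_le_mul hnk.le (hx1 k) (norm_nonneg _) (by positivity)
        _ = ‖f‖/4 := mul_one _
    linarith
  have : TopologicalSpace.IsSeparable (univ : Set E) := by
    have hsep : TopologicalSpace.IsSeparable (closure (S : Set E)) :=
      ((countable_range x).isSeparable.span).closure
    apply hsep.mono
    intro z _
    have := hdense z
    rwa [← SetLike.mem_coe, S.topologicalClosure_coe] at this
  exact TopologicalSpace.isSeparable_univ_iff.1 this

/-- A closed subspace of a reflexive space is reflexive. -/
lemma surjective_inclusionInDoubleDual_subspace {X : Type*} [NormedAddCommGroup X]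
    [NormedSpace ℝ X]
    (hrefl : Function.Surjective (NormedSpace.inclusionInDoubleDual ℝ X))
    (Y : Submodule ℝ X) (hY : IsClosed (Y : Set X)) :
    Function.Surjective (NormedSpace.inclusionInDoubleDual ℝ ↥Y) := by
  intro F
  -- restriction map
  set ρ : StrongDual ℝ X →L[ℝ] StrongDual ℝ ↥Y :=
    (ContinuousLinearMap.compL ℝ ↥Y X ℝ).flip Y.subtypeL with hρ
  have hρ_apply : ∀ (φ : StrongDual ℝ X) (y : ↥Y), ρ φ y = φ ↑y := fun _ _ => rfl
  obtain ⟨x, hx⟩ := hrefl (F.comp ρ)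
  have hxY : x ∈ Y := by
    by_contra hxY
    obtain ⟨f, hf0, hfz⟩ := exists_dual_annihilator Y hY hxY
    have h1 : ρ f = 0 := by
      ext y; simp [hρ_apply, hf0 _ y.2]
    have h2 : (NormedSpace.inclusionInDoubleDual ℝ X x) f = F (ρ f) := by
      rw [hx]; rfl
    rw [h1, map_zero, NormedSpace.dual_def] at h2
    rw [h2] at hfz; exact lt_irrefl _ hfz
  refine ⟨⟨x, hxY⟩, ?_⟩
  ext ψ
  obtain ⟨φ, hφext, -⟩ := exists_extension_norm_eq Y ψ
  have h3 : ρ φ = ψ := by ext y; rw [hρ_apply]; exact hφext y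
  calc NormedSpace.inclusionInDoubleDual ℝ ↥Y ⟨x, hxY⟩ ψ = ψ ⟨x, hxY⟩ := rfl
    _ = φ x := (hφext ⟨x, hxY⟩).symm
    _ = (NormedSpace.inclusionInDoubleDual ℝ X x) φ := rfl
    _ = F (ρ φ) := by rw [hx]; rfl
    _ = F ψ := by rw [h3]

/-- Weak sequential compactness in reflexive spaces. -/
lemma weak_seq_compact {X : Type*} [NormedAddCommGroup X] [NormedSpace ℝ X]
    (hrefl : Function.Surjective (NormedSpace.inclusionInDoubleDual ℝ X))
    (v : ℕ → X) (C : ℝ) (hb : ∀ n, ‖v n‖ ≤ C)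
    (S : Submodule ℝ X) (hS : IsClosed (S : Set X)) (hv : ∀ n, v n ∈ S) :
    ∃ (σ : ℕ → ℕ) (y : X), StrictMono σ ∧ y ∈ S ∧
      ∀ φ : StrongDual ℝ X, Tendsto (fun k => φ (v (σ k))) atTop (𝓝 (φ y)) := by
  have hC0 : 0 ≤ C := (norm_nonneg (v 0)).trans (hb 0)
  set Y : Submodule ℝ X := (Submodule.span ℝ (Set.range v)).topologicalClosure with hYdef
  have hYc : IsClosed (Y : Set X) := Submodule.isClosed_topologicalClosure _
  have hYS : Y ≤ S :=
    Submodule.topologicalClosure_minimal _ (Submodule.span_le.2 (range_subset_iff.2 hv)) hS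
  have hvY : ∀ n, v n ∈ Y := fun n =>
    (Submodule.span ℝ (Set.range v)).le_topologicalClosure
      (Submodule.subset_span (mem_range_self n))
  have hsepY : TopologicalSpace.SeparableSpace ↥Y := by
    apply TopologicalSpace.IsSeparable.separableSpace
    have : TopologicalSpace.IsSeparable (closure (Submodule.span ℝ (Set.range v) : Set X)) :=
      ((countable_range v).isSeparable.span).closure
    rwa [← Submodule.topologicalClosure_coe] at this
  have hreflY := surjective_inclusionInDoubleDual_subspace hrefl Y hYc
  have hsepYdd : TopologicalSpace.SeparableSpace (StrongDual ℝ (StrongDual ℝ ↥Y)) :=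
    (hreflY.denseRange).separableSpace (NormedSpace.inclusionInDoubleDual ℝ ↥Y).continuous
  have hsepYd : TopologicalSpace.SeparableSpace (StrongDual ℝ ↥Y) :=
    @separable_of_dual_separable (StrongDual ℝ ↥Y) _ _ hsepYdd
  have : Nonempty (StrongDual ℝ ↥Y) := ⟨0⟩
  set ψ : ℕ → StrongDual ℝ ↥Y := TopologicalSpace.denseSeq _ with hψdef
  have hψ : DenseRange ψ := TopologicalSpace.denseRange_denseSeq _
  set w : ℕ → ↥Y := fun n => ⟨v n, hvY n⟩ with hwdef
  have hwn : ∀ n, ‖w n‖ ≤ C := fun n => hb n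
  -- diagonal extraction via compact metrizable pi type
  have hcpt : IsCompact (univ.pi fun k : ℕ => Icc (-(‖ψ k‖ * C)) (‖ψ k‖ * C)) :=
    isCompact_univ_pi fun k => isCompact_Icc
  have hmem : ∀ n, (fun k => ψ k (w n)) ∈ univ.pi fun k : ℕ => Icc (-(‖ψ k‖ * C)) (‖ψ k‖ * C) := by
    intro n k _
    have h1 : |ψ k (w n)| ≤ ‖ψ k‖ * C := by
      have := (ψ k).le_opNorm (w n)
      have h2 : ‖ψ k‖ * ‖w n‖ ≤ ‖ψ k‖ * C :=
        mul_le_mul_of_nonneg_left (hwn n) (ContinuousLinearMap.opNorm_nonneg _)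
      calc |ψ k (w n)| = ‖ψ k (w n)‖ := rfl
        _ ≤ ‖ψ k‖ * ‖w n‖ := this
        _ ≤ ‖ψ k‖ * C := h2
    exact abs_le.1 h1
  obtain ⟨a, -, σ, hσ, hσa⟩ := hcpt.tendsto_subseq hmem
  rw [tendsto_pi_nhds] at hσa
  -- each dual pairing along the subsequence is Cauchy
  have hcauchy : ∀ ψ' : StrongDual ℝ ↥Y, CauchySeq fun j => ψ' (w (σ j)) := by
    intro ψ'
    rw [Metric.cauchySeq_iff]
    intro ε hε
    obtain ⟨k, hk⟩ : ∃ k, dist ψ' (ψ k) < ε / (4 * (C + 1)) :=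
      hψ.exists_dist_lt ψ' (by positivity)
    have hk' : ‖ψ' - ψ k‖ < ε / (4 * (C + 1)) := by exact lt_of_eq_of_lt (dist_eq_norm ψ' (ψ k)).symm hk
    have hcv : CauchySeq fun j => ψ k (w (σ j)) := (hσa k).cauchySeq
    rw [Metric.cauchySeq_iff] at hcv
    obtain ⟨N, hN⟩ := hcv (ε / 4) (by positivity)
    refine ⟨N, fun i hi j hj => ?_⟩
    have hbd : ∀ l : ℕ, |ψ' (w (σ l)) - ψ k (w (σ l))| ≤ ε / 4 := by
      intro l
      have h1 : |(ψ' - ψ k) (w (σ l))| ≤ ‖ψ' - ψ k‖ * ‖w (σ l)‖ := (ψ' - ψ k).le_opNorm _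
      have h2 : ‖ψ' - ψ k‖ * ‖w (σ l)‖ ≤ (ε / (4 * (C + 1))) * (C + 1) := by
        apply mul_le_mul hk'.le ((hwn _).trans (by linarith)) (norm_nonneg _) (by positivity)
      have h3 : (ε / (4 * (C + 1))) * (C + 1) = ε / 4 := by
        field_simp
      have h4 : (ψ' - ψ k) (w (σ l)) = ψ' (w (σ l)) - ψ k (w (σ l)) := rfl
      rw [h4] at h1; linarith
    have h5 := hN i hi j hj
    rw [Real.dist_eq] at h5 ⊢
    have e1 := hbd i; have e2 := hbd j
    have : |ψ' (w (σ i)) - ψ' (w (σ j))| ≤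
        |ψ' (w (σ i)) - ψ k (w (σ i))| + |ψ k (w (σ i)) - ψ k (w (σ j))|
          + |ψ k (w (σ j)) - ψ' (w (σ j))| := by
      have := abs_sub_le (ψ' (w (σ i))) (ψ k (w (σ i))) (ψ' (w (σ j)))
      have h6 := abs_sub_le (ψ k (w (σ i))) (ψ k (w (σ j))) (ψ' (w (σ j)))
      linarith
    rw [abs_sub_comm (ψ k (w (σ j)))] at this
    linarith
  -- the limit functional
  have hlim : ∀ ψ' : StrongDual ℝ ↥Y, ∃ r : ℝ,
      Tendsto (fun j => ψ' (w (σ j))) atTop (𝓝 r) :=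
    fun ψ' => cauchySeq_tendsto_of_complete (hcauchy ψ')
  choose F hF using hlim
  have hFadd : ∀ ψ₁ ψ₂, F (ψ₁ + ψ₂) = F ψ₁ + F ψ₂ := by
    intro ψ₁ ψ₂
    exact tendsto_nhds_unique (hF (ψ₁ + ψ₂)) ((hF ψ₁).add (hF ψ₂))
  have hFsmul : ∀ (c : ℝ) ψ₁, F (c • ψ₁) = c • F ψ₁ := by
    intro c ψ₁
    exact tendsto_nhds_unique (hF (c • ψ₁)) ((hF ψ₁).const_mul c)
  have hFbound : ∀ ψ₁, ‖F ψ₁‖ ≤ C * ‖ψ₁‖ := by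
    intro ψ₁
    have : ∀ j, ‖ψ₁ (w (σ j))‖ ≤ C * ‖ψ₁‖ := by
      intro j
      calc ‖ψ₁ (w (σ j))‖ ≤ ‖ψ₁‖ * ‖w (σ j)‖ := ψ₁.le_opNorm _
        _ ≤ ‖ψ₁‖ * C := mul_le_mul_of_nonneg_left (hwn _) (ContinuousLinearMap.opNorm_nonneg _)
        _ = C * ‖ψ₁‖ := mul_comm _ _
    have h2 : Tendsto (fun j => ‖ψ₁ (w (σ j))‖) atTop (𝓝 ‖F ψ₁‖) := (hF ψ₁).norm
    exact le_of_tendsto h2 (Eventually.of_forall this)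
  set FL : StrongDual ℝ (StrongDual ℝ ↥Y) :=
    LinearMap.mkContinuous
      { toFun := F, map_add' := hFadd, map_smul' := hFsmul } C hFbound with hFLdef
  obtain ⟨y₀, hy₀⟩ := hreflY FL
  refine ⟨σ, ↑y₀, hσ, hYS y₀.2, ?_⟩
  intro φ
  have hres : ∀ j, φ (v (σ j)) = (φ.comp Y.subtypeL) (w (σ j)) := fun j => rfl
  have h7 : Tendsto (fun j => (φ.comp Y.subtypeL) (w (σ j))) atTop
      (𝓝 (F (φ.comp Y.subtypeL))) := hF _
  have h8 : F (φ.comp Y.subtypeL) = φ ↑y₀ := by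
    have h9 : FL (φ.comp Y.subtypeL) = (φ.comp Y.subtypeL) y₀ := by rw [← hy₀]; rfl
    exact h9
  rw [← h8]
  exact h7

section mfacts


variable {X : Type*} [NormedAddCommGroup X] [NormedSpace ℝ X] [CompleteSpace X]
variable (P : X →L[ℝ] X) (I : X → ℝ)

/-- Minimality of `I` at `m up` on the fiber. -/
lemma I_min (h5 : CondI5 P I) (m : X → X)
    (hm : ∀ up : X, P up = up → m up ∈ Mset P I ∧ P (m up) = up)
    {up : X} (hup : P up = up) {u : X} (hu : P u = up) : I (m up) ≤ I u := by
  rcases eq_or_ne u (m up) with rfl | hne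
  · exact le_refl _
  · have hv : P (u - m up) = 0 := by
      rw [map_sub, hu, (hm up hup).2, sub_self]
    have hvne : u - m up ≠ 0 := sub_ne_zero.2 hne
    have := h5 (m up) (hm up hup).1 (u - m up) hv hvne
    rw [add_sub_cancel] at this
    exact this.le

/-- Strict uniqueness: if `I u = I (m up)` on the fiber then `u = m up`. -/
lemma I_uniq (h5 : CondI5 P I) (m : X → X)
    (hm : ∀ up : X, P up = up → m up ∈ Mset P I ∧ P (m up) = up)
    {up : X} (hup : P up = up) {u : X} (hu : P u = up) (heq : I u = I (m up)) : u = m up := by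
  by_contra hne
  have hv : P (u - m up) = 0 := by
    rw [map_sub, hu, (hm up hup).2, sub_self]
  have hvne : u - m up ≠ 0 := sub_ne_zero.2 hne
  have := h5 (m up) (hm up hup).1 (u - m up) hv hvne
  rw [add_sub_cancel] at this
  rw [heq] at this
  exact lt_irrefl _ this

/-- Sequential continuity of `m` along `X⁺`. -/
lemma m_cont_seq (hX : SpaceHyp P)
    (h1 : CondI1 I) (h2 : CondI2 P I) (h3 : CondI3 P I) (h4 : CondI4 P I) (h5 : CondI5 P I)
    (m : X → X) (hm : ∀ up : X, P up = up → m up ∈ Mset P I ∧ P (m up) = up)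
    (x : ℕ → X) (p : X) (hx : ∀ n, P (x n) = x n) (hp : P p = p)
    (hxp : Tendsto x atTop (𝓝 p)) :
    Tendsto (fun n => m (x n)) atTop (𝓝 (m p)) := by
  have hIcont : Continuous I := h1.1.continuous
  have hI0 : ∀ u, 0 ≤ I u := h1.2.2
  -- the comparison sequence
  set c : ℕ → ℝ := fun n => I (m p + (x n - p)) with hcdef
  have hcP : ∀ n, P (m p + (x n - p)) = x n := by
    intro n
    rw [map_add, map_sub, (hm p hp).2, hx n, hp]
    abel
  have hc_tendsto : Tendsto c atTop (𝓝 (I (m p))) := by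
    have h0 : Tendsto (fun n => m p + (x n - p)) atTop (𝓝 (m p)) := by
      have : Tendsto (fun n => x n - p) atTop (𝓝 0) := by
        simpa using hxp.sub (tendsto_const_nhds (x := p))
      simpa using tendsto_const_nhds.add this
    exact (hIcont.tendsto _).comp h0
  have hIle : ∀ n, I (m (x n)) ≤ c n := fun n => I_min P I h5 m hm (hx n) (hcP n)
  -- bounds
  obtain ⟨B, hB⟩ : ∃ B : ℝ, ∀ n, I (m (x n)) ≤ B ∧ ‖x n‖ ≤ B := by
    obtain ⟨B1, hB1⟩ := hc_tendsto.bddAbove_range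
    obtain ⟨B2, hB2⟩ := hxp.norm.bddAbove_range
    refine ⟨max B1 B2, fun n => ⟨?_, ?_⟩⟩
    · exact (hIle n).trans ((hB1 (mem_range_self n)).trans (le_max_left _ _))
    · exact (hB2 (mem_range_self n)).trans (le_max_right _ _)
  have hPm : ∀ n, P (m (x n)) = x n := fun n => (hm (x n) (hx n)).2
  -- boundedness of (m (x n))
  obtain ⟨C, hC⟩ : ∃ C : ℝ, ∀ n, ‖m (x n)‖ ≤ C := by
    by_contra hnc
    push_neg at hnc
    have hnc' : ∀ k : ℕ, ∃ n, (k : ℝ) < ‖m (x n)‖ := fun k => hnc k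
    choose ns hns using hnc'
    set u : ℕ → X := fun k => m (x (ns k)) with hudef
    have hnorm : Tendsto (fun k => ‖u k‖) atTop atTop :=
      tendsto_atTop_mono (fun k => (hns k).le) tendsto_natCast_atTop_atTop
    have h4' := h4 u hnorm
    obtain ⟨k, hk⟩ := (h4'.eventually (eventually_ge_atTop (2 * B + 1))).exists
    have e1 : ‖P (u k)‖ + I (u k) ≤ 2 * B := by
      have := hPm (ns k)
      have e2 : ‖P (u k)‖ = ‖x (ns k)‖ := by rw [hudef]; simp only; rw [this]
      rw [e2]
      have := hB (ns k)
      linarith [this.1, this.2]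
    linarith
  -- subsequence criterion
  apply tendsto_of_subseq_tendsto
  intro ns hns
  set w : ℕ → X := fun k => m (x (ns k)) with hwdef
  set til : ℕ → X := fun k => w k - x (ns k) with htildef
  have htil_ker : ∀ k, til k ∈ LinearMap.ker (P : X →ₗ[ℝ] X) := by
    intro k
    rw [LinearMap.mem_ker]
    show P (w k - x (ns k)) = 0
    rw [map_sub, hPm (ns k), hx (ns k), sub_self]
  have htil_bd : ∀ k, ‖til k‖ ≤ C + B := by
    intro k
    calc ‖til k‖ ≤ ‖w k‖ + ‖x (ns k)‖ := norm_sub_le _ _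
      _ ≤ C + B := add_le_add (hC (ns k)) (hB (ns k)).2
  obtain ⟨σ, y, hσ, hyker, hweak⟩ := weak_seq_compact hX.reflexive til (C + B) htil_bd
    (LinearMap.ker (P : X →ₗ[ℝ] X)) (ContinuousLinearMap.isClosed_ker P) htil_ker
  have hPy : P y = 0 := LinearMap.mem_ker.1 hyker
  set uinf : X := p + y with huinfdef
  have hPuinf : P uinf = p := by rw [huinfdef, map_add, hp, hPy, add_zero]
  have hnsσ : Tendsto (ns ∘ σ) atTop atTop := hns.comp hσ.tendsto_atTop
  have hTconv : TConv P (fun j => w (σ j)) uinf := by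
    constructor
    · have : (fun j => P (w (σ j))) = fun j => x (ns (σ j)) := by
        funext j; exact hPm (ns (σ j))
      rw [this, hPuinf]
      exact hxp.comp hnsσ
    · intro φ
      have e3 : ∀ j, w (σ j) - P (w (σ j)) = til (σ j) := by
        intro j
        rw [htildef]
        simp only
        rw [hPm (ns (σ j))]
      have e4 : uinf - P uinf = y := by rw [hPuinf, huinfdef, add_sub_cancel_left]
      simp only [e3, e4]
      exact hweak φ
  have hliminf : I uinf ≤ liminf (fun j => I (w (σ j))) atTop := h2 _ _ hTconv
  have hImp_le : I (m p) ≤ I uinf := I_min P I h5 m hm hp hPuinf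
  have hbd_above : IsBoundedUnder (· ≤ ·) atTop (fun j => I (w (σ j))) :=
    isBoundedUnder_of ⟨B, fun j => (hB (ns (σ j))).1⟩
  have hbd_below : IsBoundedUnder (· ≥ ·) atTop (fun j => I (w (σ j))) :=
    isBoundedUnder_of ⟨0, fun j => hI0 _⟩
  have hc_tendsto' : Tendsto (fun j => c (ns (σ j))) atTop (𝓝 (I (m p))) :=
    hc_tendsto.comp hnsσ
  have hlimsup : limsup (fun j => I (w (σ j))) atTop ≤ I (m p) := by
    have h1' : limsup (fun j => I (w (σ j))) atTop ≤ limsup (fun j => c (ns (σ j))) atTop := by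
      apply limsup_le_limsup (Eventually.of_forall fun j => hIle (ns (σ j)))
        (hbd_below.isCoboundedUnder_le) (hc_tendsto'.isBoundedUnder_le)
    rw [hc_tendsto'.limsup_eq] at h1'
    exact h1'
  have hchain : I (m p) ≤ liminf (fun j => I (w (σ j))) atTop := le_trans hImp_le hliminf
  have heq : I uinf = I (m p) := by
    have h6 : liminf (fun j => I (w (σ j))) atTop ≤ limsup (fun j => I (w (σ j))) atTop :=
      liminf_le_limsup hbd_above hbd_below
    linarith [hliminf, hlimsup, hImp_le, hchain, h6]
  have huinf_eq : uinf = m p := I_uniq P I h5 m hm hp hPuinf heq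
  have hItend : Tendsto (fun j => I (w (σ j))) atTop (𝓝 (I (m p))) :=
    tendsto_of_le_liminf_of_limsup_le hchain hlimsup hbd_above hbd_below
  have hItend' : Tendsto (fun j => I (w (σ j))) atTop (𝓝 (I uinf)) := by rwa [huinf_eq]
  have hfinal : Tendsto (fun j => w (σ j)) atTop (𝓝 uinf) := h3 _ _ hTconv hItend'
  rw [huinf_eq] at hfinal
  exact ⟨σ, hfinal⟩

/-- Continuity of `m` composed with a continuous map landing in `X⁺`. -/
lemma m_cont_comp (hX : SpaceHyp P)
    (h1 : CondI1 I) (h2 : CondI2 P I) (h3 : CondI3 P I) (h4 : CondI4 P I) (h5 : CondI5 P I)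
    (m : X → X) (hm : ∀ up : X, P up = up → m up ∈ Mset P I ∧ P (m up) = up)
    {A : Type*} [TopologicalSpace A] [FirstCountableTopology A]
    (g : A → X) (a : A) (hg : ContinuousAt g a) (hgP : ∀ t, P (g t) = g t) :
    ContinuousAt (fun t => m (g t)) a := by
  rw [ContinuousAt, tendsto_iff_seq_tendsto]
  intro u hu
  exact m_cont_seq P I hX h1 h2 h3 h4 h5 m hm (fun n => g (u n)) (g a) (fun n => hgP (u n))
    (hgP a) (hg.tendsto.comp hu)

end mfacts

section partE


variable {X : Type*} [NormedAddCommGroup X] [NormedSpace ℝ X] [CompleteSpace X]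
variable (P : X →L[ℝ] X) (I : X → ℝ)

lemma range_fixed (hP : ∀ u : X, P (P u) = P u) {x : X} (hx : x ∈ LinearMap.range (P : X →ₗ[ℝ] X)) :
    P x = x := by
  obtain ⟨y, rfl⟩ := hx
  exact hP y

/-- `J` is of class `C¹`. -/
lemma Jf_contDiff (hX : SpaceHyp P) (h1 : CondI1 I) : ContDiff ℝ 1 (Jf P I) := by
  set K : Submodule ℝ X := LinearMap.range (P : X →ₗ[ℝ] X) with hKdef
  letI : InnerProductSpace ℝ ↥K := InnerProductSpace.ofNorm ℝ (by
    intro x y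
    have hx : P (x : X) = x := range_fixed P hX.idem x.2
    have hy : P (y : X) = y := range_fixed P hX.idem y.2
    have h := hX.parallelogram x y hx hy
    simp only [Submodule.coe_norm]
    push_cast
    nlinarith [h])
  set Pr : X →L[ℝ] ↥K := P.codRestrict K (fun u => LinearMap.mem_range_self _ u) with hPr
  have hJf : Jf P I = fun u => (1 / 2 : ℝ) * ‖Pr u‖ ^ 2 - I u := by
    funext u
    have : ‖Pr u‖ = ‖P u‖ := rfl
    rw [Jf, this]
  rw [hJf]
  have h2 : ContDiff ℝ 1 fun u : X => ‖Pr u‖ ^ 2 :=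
    (contDiff_norm_sq ℝ).comp Pr.contDiff
  exact (h2.const_smul ((1:ℝ)/2)).sub h1.1




/-- `J(u) ≤ J(m(u⁺))` on fibers. -/
lemma Jf_le_max (h5 : CondI5 P I) (m : X → X)
    (hm : ∀ up : X, P up = up → m up ∈ Mset P I ∧ P (m up) = up)
    {up : X} (hup : P up = up) {u : X} (hu : P u = up) : Jf P I u ≤ Jf P I (m up) := by
  have h := I_min P I h5 m hm hup hu
  rw [Jf, Jf, hu, (hm up hup).2]
  linarith

/-- Mean value theorem for `Jf` along a segment. -/
lemma Jf_mvt (hJ : ContDiff ℝ 1 (Jf P I)) (c w : X) :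
    ∃ τ ∈ Ioo (0:ℝ) 1,
      Jf P I (c + w) - Jf P I c = fderiv ℝ (Jf P I) (c + τ • w) w := by
  have hdiff : Differentiable ℝ (Jf P I) := hJ.differentiable one_ne_zero
  set g : ℝ → ℝ := fun t => Jf P I (c + t • w) with hgdef
  have hg : ∀ t : ℝ, HasDerivAt g (fderiv ℝ (Jf P I) (c + t • w) w) t := by
    intro t
    have hline : HasDerivAt (fun t : ℝ => c + t • w) w t := by
      simpa using ((hasDerivAt_id t).smul_const w).const_add c
    exact (hdiff (c + t • w)).hasFDerivAt.comp_hasDerivAt t hline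
  obtain ⟨τ, hτ, hslope⟩ := exists_hasDerivAt_eq_slope g
    (fun t => fderiv ℝ (Jf P I) (c + t • w) w) zero_lt_one
    (fun t _ => (hg t).continuousAt.continuousWithinAt)
    (fun t _ => hg t)
  refine ⟨τ, hτ, ?_⟩
  have h1 : g 1 = Jf P I (c + w) := by rw [hgdef]; simp
  have h0 : g 0 = Jf P I c := by rw [hgdef]; simp
  rw [h1, h0] at hslope
  rw [hslope]
  ring

/-- The key Gateaux derivative computation at `s = 0`. -/
lemma key_deriv (hX : SpaceHyp P)
    (h1 : CondI1 I) (h2 : CondI2 P I) (h3 : CondI3 P I) (h4 : CondI4 P I) (h5 : CondI5 P I)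
    (m : X → X) (hm : ∀ up : X, P up = up → m up ∈ Mset P I ∧ P (m up) = up)
    (p z : X) (hp : P p = p) (hz : P z = z) :
    HasDerivAt (fun s : ℝ => Jf P I (m (p + s • z))) (fderiv ℝ (Jf P I) (m p) z) 0 := by
  have hJ : ContDiff ℝ 1 (Jf P I) := Jf_contDiff P I hX h1
  set D : X → ℝ := fun u => fderiv ℝ (Jf P I) u z with hDdef
  have hDcont : Continuous D :=
    (hJ.continuous_fderiv one_ne_zero).clm_apply continuous_const
  have hPfib : ∀ s : ℝ, P (p + s • z) = p + s • z := by
    intro s; rw [map_add, map_smul, hp, hz]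
  set f : ℝ → ℝ := fun s => Jf P I (m (p + s • z)) with hfdef
  have key : ∀ s : ℝ, ∃ ξ η : X, ‖ξ - m p‖ ≤ |s| * ‖z‖ ∧
      ‖η - m (p + s • z)‖ ≤ |s| * ‖z‖ ∧
      s * D ξ ≤ f s - f 0 ∧ f s - f 0 ≤ s * D η := by
    intro s
    -- lower bound via MVT from m p
    obtain ⟨τ, hτ, hmvt1⟩ := Jf_mvt P I hJ (m p) (s • z)
    set ξ : X := m p + τ • s • z with hξdef
    have hDξ : fderiv ℝ (Jf P I) ξ (s • z) = s * D ξ := by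
      rw [map_smul]; simp [hDdef, smul_eq_mul]
    obtain ⟨τ', hτ', hmvt'⟩ := Jf_mvt P I hJ (m (p + s • z) - s • z) (s • z)
    set η : X := m (p + s • z) - s • z + τ' • s • z with hηdef
    have hDη : fderiv ℝ (Jf P I) η (s • z) = s * D η := by
      rw [map_smul]; simp [hDdef, smul_eq_mul]
    refine ⟨ξ, η, ?_, ?_, ?_, ?_⟩
    · rw [hξdef, add_sub_cancel_left, norm_smul, norm_smul]
      rw [Real.norm_eq_abs, Real.norm_eq_abs]
      have : |τ| ≤ 1 := by rw [abs_of_pos hτ.1]; exact hτ.2.le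
      exact mul_le_of_le_one_left (by positivity) this
    · rw [hηdef]
      have e : m (p + s • z) - s • z + τ' • s • z - m (p + s • z) = (τ' - 1) • (s • z) := by
        rw [sub_smul, one_smul]; abel
      rw [e, norm_smul, norm_smul, Real.norm_eq_abs, Real.norm_eq_abs]
      have : |τ' - 1| ≤ 1 := by rw [abs_of_nonpos (by linarith [hτ'.2] : τ' - 1 ≤ 0)]; linarith [hτ'.1]
      exact mul_le_of_le_one_left (by positivity) this
    · -- lower bound
      have hmax : Jf P I (m p + s • z) ≤ Jf P I (m (p + s • z)) := by
        apply Jf_le_max P I h5 m hm (hPfib s)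
        rw [map_add, map_smul, (hm p hp).2, hz]
      have hf0 : f 0 = Jf P I (m p) := by rw [hfdef]; simp
      rw [hDξ] at hmvt1
      have : f s - f 0 ≥ Jf P I (m p + s • z) - Jf P I (m p) := by
        rw [hf0, hfdef]
        simp only
        linarith [hmax]
      linarith [hmvt1, this]
    · -- upper bound
      have hmax : Jf P I (m (p + s • z) - s • z) ≤ Jf P I (m p) := by
        apply Jf_le_max P I h5 m hm hp
        rw [map_sub, map_smul, (hm _ (hPfib s)).2, hz, add_sub_cancel_right]
      have hf0 : f 0 = Jf P I (m p) := by rw [hfdef]; simp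
      rw [hDη] at hmvt'
      have e2 : m (p + s • z) - s • z + s • z = m (p + s • z) := by abel
      rw [e2] at hmvt'
      have : f s - f 0 ≤ Jf P I (m (p + s • z)) - Jf P I (m (p + s • z) - s • z) := by
        rw [hf0, hfdef]
        simp only
        linarith [hmax]
      linarith [hmvt', this]
  choose ξ η hξ hη hlow hup using key
  have hmc : Tendsto (fun s : ℝ => m (p + s • z)) (𝓝 0) (𝓝 (m p)) := by
    have hc : ContinuousAt (fun s : ℝ => m (p + s • z)) 0 := by
      apply m_cont_comp P I hX h1 h2 h3 h4 h5 m hm _ 0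
      · exact (continuous_const.add (continuous_id.smul continuous_const)).continuousAt
      · exact hPfib
    have : p + (0:ℝ) • z = p := by simp
    simpa [this] using hc.tendsto
  have hsz : Tendsto (fun s : ℝ => |s| * ‖z‖) (𝓝 0) (𝓝 0) := by
    have : Tendsto (fun s : ℝ => |s|) (𝓝 0) (𝓝 0) := by
      simpa using continuous_abs.tendsto (0:ℝ)
    simpa using this.mul_const ‖z‖
  have hξt : Tendsto ξ (𝓝 0) (𝓝 (m p)) := by
    rw [tendsto_iff_norm_sub_tendsto_zero]
    exact squeeze_zero (fun s => norm_nonneg _) hξ hsz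
  have hηt : Tendsto η (𝓝 0) (𝓝 (m p)) := by
    rw [tendsto_iff_norm_sub_tendsto_zero]
    apply squeeze_zero (fun s => norm_nonneg _)
      (fun s => (norm_sub_le_norm_sub_add_norm_sub (η s) (m (p + s • z)) (m p)).trans
        (add_le_add_left (hη s) _))
    have h9 : Tendsto (fun s : ℝ => ‖m (p + s • z) - m p‖) (𝓝 0) (𝓝 0) := by
      have := hmc.sub (tendsto_const_nhds (x := m p))
      simpa using this.norm
    simpa using hsz.add h9
  have hA : Tendsto (fun s => D (ξ s)) (𝓝 0) (𝓝 (D (m p))) := (hDcont.tendsto _).comp hξt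
  have hB : Tendsto (fun s => D (η s)) (𝓝 0) (𝓝 (D (m p))) := (hDcont.tendsto _).comp hηt
  rw [hasDerivAt_iff_tendsto_slope]
  have hmin : Tendsto (fun s => min (D (ξ s)) (D (η s))) (𝓝[≠] (0:ℝ)) (𝓝 (D (m p))) := by
    have := hA.min hB
    rw [min_self] at this
    exact this.mono_left nhdsWithin_le_nhds
  have hmax : Tendsto (fun s => max (D (ξ s)) (D (η s))) (𝓝[≠] (0:ℝ)) (𝓝 (D (m p))) := by
    have := hA.max hB
    rw [max_self] at this
    exact this.mono_left nhdsWithin_le_nhds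
  have hbetween : ∀ s : ℝ, s ≠ 0 →
      min (D (ξ s)) (D (η s)) ≤ slope f 0 s ∧ slope f 0 s ≤ max (D (ξ s)) (D (η s)) := by
    intro s hs
    have hslope : slope f 0 s = (f s - f 0) / s := by
      rw [slope_def_field, sub_zero]
    rcases lt_or_gt_of_ne hs with hneg | hpos
    · constructor
      · rw [hslope]
        refine le_trans (min_le_right _ _) ?_
        rw [le_div_iff_of_neg hneg]
        linarith [hup s]
      · rw [hslope]
        refine le_trans ?_ (le_max_left _ _)
        rw [div_le_iff_of_neg hneg]
        linarith [hlow s]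
    · constructor
      · rw [hslope]
        refine le_trans (min_le_left _ _) ?_
        rw [le_div_iff₀ hpos]
        linarith [hlow s]
      · rw [hslope]
        refine le_trans ?_ (le_max_right _ _)
        rw [div_le_iff₀ hpos]
        linarith [hup s]
  have hDmp : D (m p) = fderiv ℝ (Jf P I) (m p) z := rfl
  rw [← hDmp]
  apply tendsto_of_tendsto_of_tendsto_of_le_of_le' hmin hmax
  · filter_upwards [self_mem_nhdsWithin] with s hs
    exact (hbetween s hs).1
  · filter_upwards [self_mem_nhdsWithin] with s hs
    exact (hbetween s hs).2


/-- Shifted version of `key_deriv`. -/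
lemma key_deriv_shift (hX : SpaceHyp P)
    (h1 : CondI1 I) (h2 : CondI2 P I) (h3 : CondI3 P I) (h4 : CondI4 P I) (h5 : CondI5 P I)
    (m : X → X) (hm : ∀ up : X, P up = up → m up ∈ Mset P I ∧ P (m up) = up)
    (p z : X) (hp : P p = p) (hz : P z = z) (t₀ : ℝ) :
    HasDerivAt (fun t : ℝ => Jf P I (m (p + t • z)))
      (fderiv ℝ (Jf P I) (m (p + t₀ • z)) z) t₀ := by
  have hp' : P (p + t₀ • z) = p + t₀ • z := by rw [map_add, map_smul, hp, hz]
  have h := key_deriv P I hX h1 h2 h3 h4 h5 m hm (p + t₀ • z) z hp' hz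
  have h' : HasDerivAt (fun s => Jf P I (m (p + t₀ • z + s • z)))
      ((fderiv ℝ (Jf P I) (m (p + t₀ • z))) z) (t₀ - t₀) := by
    rw [sub_self]; exact h
  have hcomp := h'.comp_sub_const
  have heq : (fun t : ℝ => Jf P I (m (p + t₀ • z + (t - t₀) • z)))
      = fun t : ℝ => Jf P I (m (p + t • z)) := by
    funext t
    congr 2
    rw [sub_smul]
    abel
  rw [heq] at hcomp
  exact hcomp

section final

variable (hX : SpaceHyp P)

set_option synthInstance.maxHeartbeats 1000000 in
/-- The full Fréchet differentiability statement on `X⁺`. -/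
lemma main_hasFDerivAt (hX : SpaceHyp P)
    (h1 : CondI1 I) (h2 : CondI2 P I) (h3 : CondI3 P I) (h4 : CondI4 P I) (h5 : CondI5 P I)
    (m : X → X) (hm : ∀ up : X, P up = up → m up ∈ Mset P I ∧ P (m up) = up) :
    ∀ x : LinearMap.range (P : X →ₗ[ℝ] X), HasFDerivAt (fun x : LinearMap.range (P : X →ₗ[ℝ] X) => Jf P I (m x))
      ((fderiv ℝ (Jf P I) (m x)).comp (LinearMap.range (P : X →ₗ[ℝ] X)).subtypeL) x := by
  set K : Submodule ℝ X := LinearMap.range (P : X →ₗ[ℝ] X) with hKdef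
  set Ψ : ↥K → ℝ := fun x => Jf P I (m ↑x) with hΨdef
  set A : ↥K → (↥K →L[ℝ] ℝ) := fun x => (fderiv ℝ (Jf P I) (m ↑x)).comp K.subtypeL with hAdef
  have hfix : ∀ y : ↥K, P ↑y = ↑y := fun y => range_fixed P hX.idem y.2
  have hJ : ContDiff ℝ 1 (Jf P I) := Jf_contDiff P I hX h1
  have hmK : Continuous fun y : ↥K => m ↑y := by
    rw [continuous_iff_continuousAt]
    intro y
    exact m_cont_comp P I hX h1 h2 h3 h4 h5 m hm _ y continuous_subtype_val.continuousAt
      (fun t => hfix t)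
  have hAcont : Continuous A :=
    ((hJ.continuous_fderiv one_ne_zero).comp hmK).clm_comp continuous_const
  intro x
  have hGat : ∀ (y h : ↥K) (t : ℝ), HasDerivAt (fun s : ℝ => Ψ (y + s • h)) (A (y + t • h) ↑h) t := by
    intro y h t
    have := key_deriv_shift P I hX h1 h2 h3 h4 h5 m hm ↑y ↑h (hfix y) (hfix h) t
    have e1 : (fun s : ℝ => Ψ (y + s • h)) = fun s : ℝ => Jf P I (m (↑y + s • ↑h)) := by
      funext s; rw [hΨdef]; norm_cast
    have e2 : A (y + t • h) ↑h = fderiv ℝ (Jf P I) (m (↑y + t • ↑h)) ↑h := by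
      rw [hAdef]
      simp only [ContinuousLinearMap.comp_apply]
      norm_cast
    rw [e1, e2]
    exact this
  rw [hasFDerivAt_iff_isLittleO_nhds_zero, Asymptotics.isLittleO_iff]
  intro ε hε
  have hev : ∀ᶠ y in 𝓝 x, ‖A y - A x‖ < ε := by
    have htd : Tendsto A (𝓝 x) (𝓝 (A x)) := hAcont.continuousAt
    filter_upwards [htd (Metric.ball_mem_nhds (A x) hε)] with y hy
    rw [mem_preimage, Metric.mem_ball] at hy
    exact lt_of_eq_of_lt (dist_eq_norm (A y) (A x)).symm hy
  obtain ⟨δ, hδpos, hδ⟩ := Metric.eventually_nhds_iff_ball.1 hev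
  filter_upwards [Metric.ball_mem_nhds (0 : ↥K) hδpos] with h hh
  rw [Metric.mem_ball, dist_zero_right] at hh
  -- MVT on t ↦ Ψ (x + t • h)
  obtain ⟨τ, hτ, hslope⟩ := exists_hasDerivAt_eq_slope (fun t => Ψ (x + t • h))
    (fun t => A (x + t • h) ↑h) zero_lt_one
    (fun t _ => (hGat x h t).continuousAt.continuousWithinAt)
    (fun t _ => hGat x h t)
  have e3 : A (x + τ • h) ↑h = Ψ (x + h) - Ψ x := by
    rw [hslope]
    norm_num
  show ‖Ψ (x + h) - Ψ x - A x h‖ ≤ ε * ‖h‖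
  have e4 : ‖Ψ (x + h) - Ψ x - A x h‖ = ‖(A (x + τ • h) - A x) h‖ := by
    rw [← e3, ContinuousLinearMap.sub_apply]
  rw [e4]
  have e5 : ‖(A (x + τ • h) - A x) h‖ ≤ ‖A (x + τ • h) - A x‖ * ‖h‖ :=
    (A (x + τ • h) - A x).le_opNorm h
  have e6 : ‖A (x + τ • h) - A x‖ ≤ ε := by
    have hd : x + τ • h ∈ Metric.ball x δ := by
      rw [Metric.mem_ball, dist_eq_norm, add_sub_cancel_left, norm_smul, Real.norm_eq_abs,
        abs_of_pos hτ.1]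
      calc τ * ‖h‖ ≤ 1 * ‖h‖ := mul_le_mul_of_nonneg_right hτ.2.le (norm_nonneg _)
        _ = ‖h‖ := one_mul _
        _ < δ := hh
    exact (hδ _ hd).le
  calc ‖(A (x + τ • h) - A x) h‖ ≤ ‖A (x + τ • h) - A x‖ * ‖h‖ := e5
    _ ≤ ε * ‖h‖ := mul_le_mul_of_nonneg_right e6 (norm_nonneg _)

end final

end partE


/-- (cf. Proposition 4.1 c), d)).
Under (I1)–(I5), the reduced functional `J ∘ m : X⁺ → ℝ` is of class `C¹` and
`(J ∘ m)'(u⁺)[w] = J'(m(u⁺))[w]` for all `u⁺, w ∈ X⁺`.  Here `X⁺` is viewed as the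
(closed) range of the projection `P`. -/
theorem statement2 (P : X →L[ℝ] X) (I : X → ℝ) (hX : SpaceHyp P)
    (h1 : CondI1 I) (h2 : CondI2 P I) (h3 : CondI3 P I) (h4 : CondI4 P I) (h5 : CondI5 P I)
    (m : X → X) (hm : ∀ up : X, P up = up → m up ∈ Mset P I ∧ P (m up) = up) :
    ContDiff ℝ 1 (fun x : LinearMap.range (P : X →ₗ[ℝ] X) => Jf P I (m x)) ∧
    ∀ up w : LinearMap.range (P : X →ₗ[ℝ] X),
      fderiv ℝ (fun x : LinearMap.range (P : X →ₗ[ℝ] X) => Jf P I (m x)) up w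
        = fderiv ℝ (Jf P I) (m up) (w : X) := by
  have hF := main_hasFDerivAt P I hX h1 h2 h3 h4 h5 m hm
  have hfderiv : ∀ x : LinearMap.range (P : X →ₗ[ℝ] X),
      fderiv ℝ (fun x : LinearMap.range (P : X →ₗ[ℝ] X) => Jf P I (m x)) x
        = (fderiv ℝ (Jf P I) (m x)).comp (LinearMap.range (P : X →ₗ[ℝ] X)).subtypeL :=
    fun x => (hF x).fderiv
  constructor
  · rw [contDiff_one_iff_fderiv]
    constructor
    · exact fun x => (hF x).differentiableAt
    · have heq : (fderiv ℝ fun x : LinearMap.range (P : X →ₗ[ℝ] X) => Jf P I (m x))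
          = fun x : LinearMap.range (P : X →ₗ[ℝ] X) =>
            (fderiv ℝ (Jf P I) (m ↑x)).comp (LinearMap.range (P : X →ₗ[ℝ] X)).subtypeL := by
        funext x; exact hfderiv x
      rw [heq]
      have hJ : ContDiff ℝ 1 (Jf P I) := Jf_contDiff P I hX h1
      have hmK : Continuous fun y : LinearMap.range (P : X →ₗ[ℝ] X) => m ↑y := by
        rw [continuous_iff_continuousAt]
        intro y
        exact m_cont_comp P I hX h1 h2 h3 h4 h5 m hm _ y continuous_subtype_val.continuousAt
          (fun t => range_fixed P hX.idem t.2)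
      exact ((hJ.continuous_fderiv one_ne_zero).comp hmK).clm_comp continuous_const
  · intro up w
    rw [hfderiv up]
    rfl


end
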